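/- Let 1/2 < α < 1 and c < 0, and let N : ℕ → ℕ satisfy N(d) > d for all d and N(d) - 2d ≤ c·d^α for all sufficiently large d. Then P_{d,N(d)} → 1 as d → ∞. -/
import Mathlib


open Filter Finset Real Topology


lemma sumA (n : ℕ) : 2 * ∑ j ∈ range (n + 1), j * n.choose j = n * 2 ^ n := by
  cases n with
  | zero => simp
  | succ m =>
    have : ∑ j ∈ range (m + 2), j * (m+1).choose j
        = ∑ k ∈ range (m + 1), (k+1) * (m+1).choose (k+1) := by
      rw [Finset.sum_range_succ' (fun j => j * (m+1).choose j) (m+1)]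
      simp
    rw [this]
    have h2 : ∀ k, (k+1) * (m+1).choose (k+1) = (m+1) * m.choose k := by
      intro k
      rw [Nat.add_one_mul_choose_eq m k, Nat.mul_comm]
    simp only [h2, ← Finset.mul_sum, Nat.sum_range_choose]
    ring

lemma sumB (n : ℕ) : 4 * ∑ j ∈ range (n + 1), j * (j-1) * n.choose j = n * (n-1) * 2 ^ n := by
  match n with
  | 0 => simp
  | 1 => decide
  | (m+2) =>
    have : ∑ j ∈ range (m + 3), j * (j-1) * (m+2).choose j
        = ∑ k ∈ range (m + 2), (k+1) * k * (m+2).choose (k+1) := by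
      rw [Finset.sum_range_succ' (fun j => j * (j-1) * (m+2).choose j) (m+2)]
      simp
    rw [this]
    have h2 : ∀ k, (k+1) * k * (m+2).choose (k+1) = (m+2) * (k * (m+1).choose k) := by
      intro k
      have := Nat.add_one_mul_choose_eq (m+1) k
      calc (k+1) * k * (m+2).choose (k+1) = k * ((m+2).choose (k+1) * (k+1)) := by ring
        _ = k * ((m+2) * (m+1).choose k) := by rw [← this]
        _ = (m+2) * (k * (m+1).choose k) := by ring
    simp only [h2, ← Finset.mul_sum]
    have hA := sumA (m+1)
    have : 4 * ((m+2) * ∑ k ∈ range (m+2), k * (m+1).choose k)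
        = (m+2) * (2 * (2 * ∑ k ∈ range (m+2), k * (m+1).choose k)) := by ring
    rw [this, hA]
    simp [pow_succ]
    ring

lemma varianceId (n : ℕ) :
    ∑ j ∈ range (n + 1), (n.choose j : ℝ) * (2 * (j:ℝ) - (n:ℝ)) ^ 2 = (n:ℝ) * 2 ^ n := by
  have h0 : ∑ j ∈ range (n + 1), (n.choose j : ℝ) = 2 ^ n := by
    rw [← Nat.cast_sum, Nat.sum_range_choose]; push_cast; ring
  have h1 : ∑ j ∈ range (n + 1), (j : ℝ) * (n.choose j : ℝ) = n * 2 ^ n / 2 := by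
    have hA := sumA n
    have hc : (2 * ∑ j ∈ range (n + 1), (j : ℝ) * (n.choose j : ℝ)) = (n : ℝ) * 2 ^ n := by
      exact_mod_cast hA
    linarith
  have h2 : ∑ j ∈ range (n + 1), (j : ℝ) * ((j:ℝ) - 1) * (n.choose j : ℝ)
      = n * (n - 1) * 2 ^ n / 4 := by
    have hB := sumB n
    have hc : ((4 * ∑ j ∈ range (n + 1), j * (j-1) * n.choose j : ℕ) : ℝ)
        = ((n * (n-1) * 2 ^ n : ℕ) : ℝ) := by rw [hB]
    have he : ∑ j ∈ range (n + 1), ((j * (j-1) * n.choose j : ℕ) : ℝ)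
        = ∑ j ∈ range (n + 1), (j : ℝ) * ((j:ℝ) - 1) * (n.choose j : ℝ) := by
      apply Finset.sum_congr rfl
      intro j _
      cases j with
      | zero => simp
      | succ k => push_cast; ring
    rw [Nat.cast_mul, Nat.cast_sum, he] at hc
    cases n with
    | zero => simp
    | succ m =>
      rw [Nat.cast_mul, Nat.cast_mul] at hc
      push_cast at hc ⊢
      linarith
  have hexp : ∑ j ∈ range (n + 1), (n.choose j : ℝ) * (2 * (j:ℝ) - (n:ℝ)) ^ 2
      = 4 * (∑ j ∈ range (n + 1), (j : ℝ) * ((j:ℝ) - 1) * (n.choose j : ℝ))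
        + (4 - 4 * n) * (∑ j ∈ range (n + 1), (j : ℝ) * (n.choose j : ℝ))
        + (n:ℝ)^2 * (∑ j ∈ range (n + 1), (n.choose j : ℝ)) := by
    rw [Finset.mul_sum, Finset.mul_sum, Finset.mul_sum, ← Finset.sum_add_distrib,
      ← Finset.sum_add_distrib]
    apply Finset.sum_congr rfl
    intro j _
    ring
  rw [hexp, h0, h1, h2]
  ring

/-- The Wendel probability `P_{d,N} = 2^{1-N} · Σ_{i=0}^{d-1} C(N-1, i)`. -/
noncomputable def wendelP (d N : ℕ) : ℝ :=
  (∑ i ∈ Finset.range d, ((N - 1).choose i : ℝ)) / 2 ^ (N - 1)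

theorem wendel_tendsto_one_subcritical (α c : ℝ) (hα1 : 1 / 2 < α) (hα2 : α < 1)
    (hc : c < 0) (N : ℕ → ℕ) (hN : ∀ d, d < N d)
    (h1 : ∀ᶠ d : ℕ in atTop, (N d : ℝ) - 2 * d ≤ c * (d : ℝ) ^ α) :
    Tendsto (fun d : ℕ => wendelP d (N d)) atTop (𝓝 1) := by
  have hcne : c ≠ 0 := ne_of_lt hc
  -- the lower squeeze function tends to 1
  have hg : Tendsto (fun d : ℕ => 1 - 2 / c ^ 2 * (d : ℝ) ^ (1 - 2 * α)) atTop (𝓝 1) := by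
    have h0 : Tendsto (fun x : ℝ => x ^ (-(2 * α - 1))) atTop (𝓝 0) :=
      tendsto_rpow_neg_atTop (by linarith)
    have h0' : Tendsto (fun d : ℕ => (d : ℝ) ^ (1 - 2 * α)) atTop (𝓝 0) := by
      have heq : (fun d : ℕ => (d : ℝ) ^ (1 - 2 * α))
          = (fun x : ℝ => x ^ (-(2 * α - 1))) ∘ (Nat.cast : ℕ → ℝ) := by
        funext d; simp only [Function.comp_apply]; congr 1; ring
      rw [heq]
      exact h0.comp (tendsto_natCast_atTop_atTop (R := ℝ))
    have : Tendsto (fun d : ℕ => (1:ℝ) - 2 / c ^ 2 * (d : ℝ) ^ (1 - 2 * α)) atTop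
        (𝓝 (1 - 2 / c ^ 2 * 0)) := tendsto_const_nhds.sub (h0'.const_mul _)
    simpa using this
  refine tendsto_of_tendsto_of_tendsto_of_le_of_le' hg tendsto_const_nhds ?_ ?_
  · -- lower bound, eventually
    filter_upwards [h1, eventually_ge_atTop 1] with d hcd hd1
    set n := N d - 1 with hn
    have hNd : 1 ≤ N d := by have := hN d; omega
    have hn1 : N d = n + 1 := by omega
    have hdn : d ≤ n := by have := hN d; omega
    have hd0 : (0 : ℝ) < d := by exact_mod_cast hd1
    have hrp : (0 : ℝ) < (d : ℝ) ^ α := Real.rpow_pos_of_pos hd0 α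
    have htpos : (0 : ℝ) < -c * (d : ℝ) ^ α := mul_pos (neg_pos.mpr hc) hrp
    set t := -c * (d : ℝ) ^ α with htdef
    have hncast : (n : ℝ) = (N d : ℝ) - 1 := by rw [hn1]; push_cast; ring
    have hnle : (n : ℝ) ≤ 2 * d := by
      have : c * (d : ℝ) ^ α < 0 := mul_neg_of_neg_of_pos hc hrp
      linarith
    have h2n : (0 : ℝ) < 2 ^ n := by positivity
    have htot : (∑ i ∈ Finset.range (n + 1), (n.choose i : ℝ)) = 2 ^ n := by
      rw [← Nat.cast_sum, Nat.sum_range_choose]; push_cast; ring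
    have hsplit : (∑ i ∈ Finset.range d, (n.choose i : ℝ))
        + (∑ i ∈ Finset.Ico d (n + 1), (n.choose i : ℝ)) = 2 ^ n := by
      rw [Finset.sum_range_add_sum_Ico _ (by omega : d ≤ n + 1)]
      exact htot
    -- Chebyshev bound on the tail
    have hT : t ^ 2 * (∑ i ∈ Finset.Ico d (n + 1), (n.choose i : ℝ)) ≤ (n : ℝ) * 2 ^ n := by
      calc t ^ 2 * (∑ i ∈ Finset.Ico d (n + 1), (n.choose i : ℝ))
          = ∑ i ∈ Finset.Ico d (n + 1), t ^ 2 * (n.choose i : ℝ) := by rw [Finset.mul_sum]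
        _ ≤ ∑ i ∈ Finset.Ico d (n + 1), (n.choose i : ℝ) * (2 * (i:ℝ) - (n:ℝ)) ^ 2 := by
            apply Finset.sum_le_sum
            intro i hi
            have hdi : d ≤ i := (Finset.mem_Ico.mp hi).1
            have hdi' : (d : ℝ) ≤ i := by exact_mod_cast hdi
            have hti : t ≤ 2 * (i : ℝ) - (n : ℝ) := by
              rw [htdef, hncast]; linarith
            have hsq : t ^ 2 ≤ (2 * (i : ℝ) - (n : ℝ)) ^ 2 :=
              pow_le_pow_left₀ htpos.le hti 2
            rw [mul_comm]
            exact mul_le_mul_of_nonneg_left hsq (Nat.cast_nonneg _)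
        _ ≤ ∑ i ∈ Finset.range (n + 1), (n.choose i : ℝ) * (2 * (i:ℝ) - (n:ℝ)) ^ 2 := by
            apply Finset.sum_le_sum_of_subset_of_nonneg
            · intro i hi
              simp only [Finset.mem_Ico, Finset.mem_range] at hi ⊢
              omega
            · intro i _ _
              positivity
        _ = (n : ℝ) * 2 ^ n := varianceId n
    -- turn into the desired bound
    have hKey : (2 / c ^ 2 * (d : ℝ) ^ (1 - 2 * α)) * t ^ 2 = 2 * (d : ℝ) := by
      have hprod : (d : ℝ) ^ (1 - 2 * α) * ((d : ℝ) ^ α * (d : ℝ) ^ α) = d := by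
        rw [← Real.rpow_add hd0, ← Real.rpow_add hd0]
        have : 1 - 2 * α + (α + α) = (1 : ℝ) := by ring
        rw [this, Real.rpow_one]
      have hc2 : c ^ 2 ≠ 0 := pow_ne_zero 2 hcne
      calc 2 / c ^ 2 * (d : ℝ) ^ (1 - 2 * α) * t ^ 2
          = (2 * (c ^ 2 / c ^ 2)) * ((d : ℝ) ^ (1 - 2 * α) * ((d:ℝ)^α * (d:ℝ)^α)) := by
            rw [htdef]; ring
        _ = 2 * (d : ℝ) := by rw [div_self hc2, hprod]; ring
    have hTle : (∑ i ∈ Finset.Ico d (n + 1), (n.choose i : ℝ))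
        ≤ (2 / c ^ 2 * (d : ℝ) ^ (1 - 2 * α)) * 2 ^ n := by
      have h2 : t ^ 2 * (∑ i ∈ Finset.Ico d (n + 1), (n.choose i : ℝ))
          ≤ t ^ 2 * ((2 / c ^ 2 * (d : ℝ) ^ (1 - 2 * α)) * 2 ^ n) := by
        have : (n : ℝ) * 2 ^ n ≤ 2 * (d : ℝ) * 2 ^ n :=
          mul_le_mul_of_nonneg_right hnle h2n.le
        calc t ^ 2 * (∑ i ∈ Finset.Ico d (n + 1), (n.choose i : ℝ))
            ≤ (n : ℝ) * 2 ^ n := hT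
          _ ≤ 2 * (d : ℝ) * 2 ^ n := this
          _ = t ^ 2 * ((2 / c ^ 2 * (d : ℝ) ^ (1 - 2 * α)) * 2 ^ n) := by
              rw [← hKey]; ring
      exact le_of_mul_le_mul_left h2 (by positivity)
    -- conclude
    show 1 - 2 / c ^ 2 * (d : ℝ) ^ (1 - 2 * α) ≤ wendelP d (N d)
    rw [wendelP, ← hn]
    rw [le_div_iff₀ h2n]
    nlinarith [hTle, hsplit]
  · -- upper bound: wendelP ≤ 1, always
    apply Eventually.of_forall
    intro d
    rw [wendelP]
    set n := N d - 1 with hn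
    have hdn : d ≤ n := by have := hN d; omega
    have h2n : (0 : ℝ) < 2 ^ n := by positivity
    rw [div_le_one h2n]
    have htot : (∑ i ∈ Finset.range (n + 1), (n.choose i : ℝ)) = 2 ^ n := by
      rw [← Nat.cast_sum, Nat.sum_range_choose]; push_cast; ring
    calc (∑ i ∈ Finset.range d, (n.choose i : ℝ))
        ≤ ∑ i ∈ Finset.range (n + 1), (n.choose i : ℝ) := by
          apply Finset.sum_le_sum_of_subset_of_nonneg
          · exact Finset.range_subset_range.mpr (by omega)
          · intro i _ _; positivity
      _ = 2 ^ n := htot
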